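/- Let q = n1 - n2 with 0 ≤ n2 < n1, let A_1, …, A_{n1} be complex m1 × m2 matrices each of rank at most r, and let γ_{ik} ∈ ℂ (i = 1,…,q, k = 1,…,n1) satisfy γ_{i1} A_1 + ⋯ + γ_{i n1} A_{n1} = 0 for every i = 1,…,q, with the q × q matrix Γ = (γ_{ik})_{1 ≤ i,k ≤ q} invertible. If, in addition, each of the n2 column spaces C(A_{q+1}), C(A_{q+2}), …, C(A_{n1}) has dimension exactly r and these n2 subspaces are independent (their sum is a direct sum), then dim C(A_1, A_2, …, A_{n1}) = n2 · r. -/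

import Mathlib

open Module Submodule

lemma finrank_sup_finset_of_iSupIndep {K V : Type*} [Field K] [AddCommGroup V] [Module K V]
    [FiniteDimensional K V] {ι : Type*} [DecidableEq ι] (p : ι → Submodule K V)
    (h : iSupIndep p) (s : Finset ι) :
    Module.finrank K ↥(s.sup p) = ∑ i ∈ s, Module.finrank K (p i) := by
  induction s using Finset.cons_induction with
  | empty => simp [finrank_bot K V]
  | cons a s ha ih =>
    rw [Finset.sup_cons, Finset.sum_cons, ← ih]
    have hdisj : Disjoint (p a) (s.sup p) := by
      refine (h a).mono_right ?_
      exact Finset.sup_le fun j hj => le_iSup_of_le j (le_iSup_of_le (by rintro rfl; exact ha hj) le_rfl)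
    have := Submodule.finrank_sup_add_finrank_inf_eq (p a) (s.sup p)
    rw [hdisj.eq_bot, finrank_bot K V, add_zero] at this
    exact this

lemma finrank_iSup_of_iSupIndep {K V : Type*} [Field K] [AddCommGroup V] [Module K V]
    [FiniteDimensional K V] {ι : Type*} [Fintype ι] (p : ι → Submodule K V)
    (h : iSupIndep p) :
    Module.finrank K ↥(⨆ i, p i) = ∑ i, Module.finrank K (p i) := by
  classical
  rw [← Finset.sup_univ_eq_iSup]
  exact finrank_sup_finset_of_iSupIndep p h Finset.univ

/-- Under the hypotheses of Statement 1, if in addition each of the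
`n2` column spaces `C(A_{q+1}),…,C(A_{n1})` has dimension exactly `r` and these
subspaces are independent (their sum is a direct sum), then
`dim C(A_1,…,A_{n1}) = n2 · r`. -/
theorem stmt2 (n1 n2 m1 m2 r : ℕ) (hn : n2 < n1)
    (A : Fin n1 → Matrix (Fin m1) (Fin m2) ℂ)
    (hrank : ∀ k : Fin n1, (A k).rank ≤ r)
    (γ : Fin (n1 - n2) → Fin n1 → ℂ)
    (hsum : ∀ i : Fin (n1 - n2), ∑ k : Fin n1, γ i k • A k = 0)
    (hΓ : IsUnit (Matrix.of fun i k : Fin (n1 - n2) =>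
      γ i (Fin.castLE (Nat.sub_le n1 n2) k)).det)
    (hdim : ∀ k : {j : Fin n1 // n1 - n2 ≤ (j : ℕ)},
      Module.finrank ℂ
        (Submodule.span ℂ
          (Set.range fun j : Fin m2 => fun i : Fin m1 => A k.val i j)) = r)
    (hindep : iSupIndep fun k : {j : Fin n1 // n1 - n2 ≤ (j : ℕ)} =>
      Submodule.span ℂ
        (Set.range fun j : Fin m2 => fun i : Fin m1 => A k.val i j)) :
    Module.finrank ℂ
      (Submodule.span ℂ
        (Set.range fun p : Fin n1 × Fin m2 => fun i : Fin m1 => A p.1 i p.2)) =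
      n2 * r := by
  classical
  have hq : n1 - n2 ≤ n1 := Nat.sub_le n1 n2
  -- the span of the tail matrices (as matrices)
  set S : Submodule ℂ (Matrix (Fin m1) (Fin m2) ℂ) :=
    Submodule.span ℂ (Set.range fun k : {j : Fin n1 // n1 - n2 ≤ (j : ℕ)} => A k.val) with hS
  set B : Matrix (Fin (n1 - n2)) (Fin (n1 - n2)) ℂ :=
    Matrix.of (fun i k : Fin (n1 - n2) => γ i (Fin.castLE hq k)) with hB
  -- split the sum hypothesis
  have hu : ∀ i : Fin (n1 - n2), (∑ k : Fin (n1 - n2), B i k • A (Fin.castLE hq k)) ∈ S := by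
    intro i
    have hsplit := Fintype.sum_subtype_add_sum_subtype
      (fun k : Fin n1 => n1 - n2 ≤ (k : ℕ)) (fun k => γ i k • A k)
    rw [hsum i] at hsplit
    have he : ∑ k : {x : Fin n1 // ¬ n1 - n2 ≤ (x : ℕ)}, γ i k.val • A k.val
        = ∑ k : Fin (n1 - n2), B i k • A (Fin.castLE hq k) := by
      refine Fintype.sum_equiv
        ⟨fun k : {x : Fin n1 // ¬ n1 - n2 ≤ (x : ℕ)} => (⟨(k : Fin n1), by omega⟩ : Fin (n1 - n2)),
         fun k => ⟨Fin.castLE hq k, by simp [Fin.castLE]; omega⟩,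
         fun k => by ext; simp [Fin.castLE],
         fun k => by ext; simp [Fin.castLE]⟩ _ _ ?_
      intro k
      simp [hB, Fin.castLE]
    rw [he] at hsplit
    have : ∑ k : Fin (n1 - n2), B i k • A (Fin.castLE hq k)
        = - ∑ k : {x : Fin n1 // n1 - n2 ≤ (x : ℕ)}, γ i k.val • A k.val := by
      linear_combination (norm := module) hsplit
    rw [this]
    exact neg_mem (Submodule.sum_mem _ fun k _ =>
      Submodule.smul_mem _ _ (Submodule.subset_span ⟨k, rfl⟩))
  -- every A k lies in S
  have hAS : ∀ k : Fin n1, A k ∈ S := by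
    intro k
    by_cases hk : n1 - n2 ≤ (k : ℕ)
    · exact Submodule.subset_span ⟨⟨k, hk⟩, rfl⟩
    · have hklt : (k : ℕ) < n1 - n2 := not_le.mp hk
      set j : Fin (n1 - n2) := ⟨k, hklt⟩ with hj
      have hkc : k = Fin.castLE hq j := by ext; simp [Fin.castLE, hj]
      have key : A (Fin.castLE hq j)
          = ∑ i : Fin (n1 - n2), (B⁻¹ j i) • (∑ l : Fin (n1 - n2), B i l • A (Fin.castLE hq l)) := by
        simp_rw [Finset.smul_sum, smul_smul]
        rw [Finset.sum_comm]
        simp_rw [← Finset.sum_smul, ← Matrix.mul_apply, Matrix.nonsing_inv_mul B hΓ,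
          Matrix.one_apply]
        simp
      rw [hkc, key]
      exact Submodule.sum_mem _ fun i _ => Submodule.smul_mem _ _ (hu i)
  -- column-extraction linear map
  let colMap : Fin m2 → (Matrix (Fin m1) (Fin m2) ℂ →ₗ[ℂ] (Fin m1 → ℂ)) := fun j =>
    { toFun := fun M => fun i => M i j
      map_add' := fun M N => rfl
      map_smul' := fun c M => rfl }
  set f : {j : Fin n1 // n1 - n2 ≤ (j : ℕ)} → Submodule ℂ (Fin m1 → ℂ) := fun k =>
    Submodule.span ℂ (Set.range fun j : Fin m2 => fun i : Fin m1 => A k.val i j) with hf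
  have hTW : Submodule.span ℂ
      (Set.range fun p : Fin n1 × Fin m2 => fun i : Fin m1 => A p.1 i p.2) = ⨆ k, f k := by
    apply le_antisymm
    · rw [Submodule.span_le]
      rintro _ ⟨p, rfl⟩
      have hmap : Submodule.map (colMap p.2) S ≤ ⨆ k, f k := by
        rw [hS, Submodule.map_span, Submodule.span_le]
        rintro _ ⟨_, ⟨k, rfl⟩, rfl⟩
        exact le_iSup f k (Submodule.subset_span ⟨p.2, rfl⟩)
      exact hmap ⟨A p.1, hAS p.1, rfl⟩
    · refine iSup_le fun k => ?_
      rw [hf, Submodule.span_le]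
      rintro _ ⟨j, rfl⟩
      exact Submodule.subset_span ⟨(k.val, j), rfl⟩
  rw [hTW, finrank_iSup_of_iSupIndep f hindep]
  have hcard : Fintype.card {j : Fin n1 // n1 - n2 ≤ (j : ℕ)} = n2 := by
    rw [Fintype.card_congr
      (⟨fun k : {j : Fin n1 // n1 - n2 ≤ (j : ℕ)} => (⟨(k : Fin n1) - (n1 - n2), by omega⟩ : Fin n2),
        fun j => ⟨⟨(j : ℕ) + (n1 - n2), by omega⟩, by simp⟩,
        fun k => by ext; simp; omega,
        fun j => by ext; simp⟩ : {j : Fin n1 // n1 - n2 ≤ (j : ℕ)} ≃ Fin n2)]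
    exact Fintype.card_fin n2
  calc ∑ k, Module.finrank ℂ (f k) = ∑ _k : {j : Fin n1 // n1 - n2 ≤ (j : ℕ)}, r := by
        exact Finset.sum_congr rfl fun k _ => hdim k
    _ = n2 * r := by rw [Finset.sum_const, Finset.card_univ, hcard, smul_eq_mul]
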